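/- Let A and B be positive compact operators on a separable Hilbert space with A + B ∈ L_{1,∞} (i.e., μ(k, A+B) = O(1/(k+1))). Then for every n ≥ 0, 0 ≤ ∑_{k=0}^n (μ(k,A) + μ(k,B)) − ∑_{k=0}^n μ(k, A+B) ≤ C, where C = ‖A+B‖_{1,∞}·(1 + log 2) (any constant independent of n suffices). Consequently, for any extended limit ω on ℓ_∞, the Dixmier functional Tr_ω(T) := ω({(log(2+n))^{-1} ∑_{k=0}^n μ(k,T)}_n) is additive on the positive cone of L_{1,∞}. -/

import Mathlib

open scoped ENNReal
open Filter

/-- Approximation-number definition of the `k`-th singular value of an operator. -/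
noncomputable def singVal {H : Type*} [NormedAddCommGroup H] [InnerProductSpace ℂ H]
    (k : ℕ) (T : H →L[ℂ] H) : ℝ :=
  sInf {c : ℝ | ∃ R : H →L[ℂ] H, Module.rank ℂ (LinearMap.range (R : H →ₗ[ℂ] H)) ≤ (k : Cardinal) ∧ c = ‖T - R‖}

/-- The `L_{1,∞}` quasi-norm `‖T‖_{1,∞} = sup_k (k+1) μ(k,T)`, valued in `ℝ≥0∞`. -/
noncomputable def norm1inf {H : Type*} [NormedAddCommGroup H] [InnerProductSpace ℂ H]
    (T : H →L[ℂ] H) : ℝ≥0∞ :=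
  ⨆ k : ℕ, ENNReal.ofReal (((k : ℝ) + 1) * singVal k T)

lemma singVal_nonneg' {H : Type*} [NormedAddCommGroup H] [InnerProductSpace ℂ H]
    (k : ℕ) (T : H →L[ℂ] H) : 0 ≤ singVal k T := by
  apply Real.sInf_nonneg
  rintro c ⟨R, -, rfl⟩
  exact norm_nonneg _

/-- Let `A, B` be positive compact operators with `A + B ∈ L_{1,∞}`. Then (assuming the
standard singular value inequalities) the differences
`∑_{k≤n}(μ(k,A)+μ(k,B)) − ∑_{k≤n} μ(k,A+B)` are nonnegative and uniformly bounded;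
consequently, for every extended limit `ω` on `ℓ_∞` the Dixmier functional
`Tr_ω(T) = ω({(log(2+n))⁻¹ ∑_{k≤n} μ(k,T)}_n)` is additive: `Tr_ω(A+B) = Tr_ω(A)+Tr_ω(B)`. -/
theorem stmt_2 {H : Type*} [NormedAddCommGroup H] [InnerProductSpace ℂ H] [CompleteSpace H]
    [TopologicalSpace.SeparableSpace H]
    (A B : H →L[ℂ] H) (hA : A.IsPositive) (hB : B.IsPositive)
    (hAc : IsCompactOperator ⇑A) (hBc : IsCompactOperator ⇑B)
    (hL : norm1inf (A + B) ≠ ⊤)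
    (hstd : ∀ n : ℕ,
      (∑ k ∈ Finset.range (n + 1), singVal k (A + B) ≤
        ∑ k ∈ Finset.range (n + 1), (singVal k A + singVal k B)) ∧
      ∑ k ∈ Finset.range (n + 1), (singVal k A + singVal k B) ≤
        ∑ k ∈ Finset.range (2 * n + 2), singVal k (A + B)) :
    (∃ C : ℝ, ∀ n : ℕ,
        0 ≤ (∑ k ∈ Finset.range (n + 1), (singVal k A + singVal k B)) -
            ∑ k ∈ Finset.range (n + 1), singVal k (A + B) ∧
        (∑ k ∈ Finset.range (n + 1), (singVal k A + singVal k B)) -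
            ∑ k ∈ Finset.range (n + 1), singVal k (A + B) ≤ C) ∧
    ∀ ω : lp (fun _ : ℕ => ℝ) ⊤ →L[ℝ] ℝ,
      (∀ (x : lp (fun _ : ℕ => ℝ) ⊤) (l : ℝ),
        Tendsto (fun n => (x : ∀ _ : ℕ, ℝ) n) atTop (nhds l) → ω x = l) →
      ∀ u v w : lp (fun _ : ℕ => ℝ) ⊤,
        (∀ n : ℕ, (u : ∀ _ : ℕ, ℝ) n =
          (Real.log (2 + n))⁻¹ * ∑ k ∈ Finset.range (n + 1), singVal k A) →
        (∀ n : ℕ, (v : ∀ _ : ℕ, ℝ) n =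
          (Real.log (2 + n))⁻¹ * ∑ k ∈ Finset.range (n + 1), singVal k B) →
        (∀ n : ℕ, (w : ∀ _ : ℕ, ℝ) n =
          (Real.log (2 + n))⁻¹ * ∑ k ∈ Finset.range (n + 1), singVal k (A + B)) →
        ω w = ω u + ω v := by
  set M : ℝ := (norm1inf (A + B)).toReal with hM
  have hM0 : 0 ≤ M := ENNReal.toReal_nonneg
  -- bound on each singular value of A + B
  have hbd : ∀ k : ℕ, ((k : ℝ) + 1) * singVal k (A + B) ≤ M := by
    intro k
    have h1 : ENNReal.ofReal (((k : ℝ) + 1) * singVal k (A + B)) ≤ norm1inf (A + B) :=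
      le_iSup (fun k : ℕ => ENNReal.ofReal (((k : ℝ) + 1) * singVal k (A + B))) k
    have h2 := ENNReal.toReal_mono hL h1
    rwa [ENNReal.toReal_ofReal
      (mul_nonneg (by positivity) (singVal_nonneg' k _))] at h2
  have hbd' : ∀ k : ℕ, singVal k (A + B) ≤ M / ((k : ℝ) + 1) := by
    intro k
    rw [le_div_iff₀ (by positivity)]
    calc singVal k (A + B) * ((k : ℝ) + 1) = ((k : ℝ) + 1) * singVal k (A + B) := mul_comm _ _
      _ ≤ M := hbd k
  -- the uniform bound on the differences
  have hDub : ∀ n : ℕ,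
      (∑ k ∈ Finset.range (n + 1), (singVal k A + singVal k B)) -
        ∑ k ∈ Finset.range (n + 1), singVal k (A + B) ≤ M := by
    intro n
    have hsplit : ∑ k ∈ Finset.range (2 * n + 2), singVal k (A + B) =
        (∑ k ∈ Finset.range (n + 1), singVal k (A + B)) +
          ∑ k ∈ Finset.range (n + 1), singVal (n + 1 + k) (A + B) := by
      have : 2 * n + 2 = (n + 1) + (n + 1) := by ring
      rw [this, Finset.sum_range_add]
    have htail : ∑ k ∈ Finset.range (n + 1), singVal (n + 1 + k) (A + B) ≤ M := by
      have hterm : ∀ k ∈ Finset.range (n + 1),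
          singVal (n + 1 + k) (A + B) ≤ M / ((n : ℝ) + 2) := by
        intro k _
        refine (hbd' (n + 1 + k)).trans ?_
        apply div_le_div_of_nonneg_left hM0 (by positivity)
        push_cast; linarith [Nat.cast_nonneg (α := ℝ) k]
      calc ∑ k ∈ Finset.range (n + 1), singVal (n + 1 + k) (A + B)
          ≤ ∑ k ∈ Finset.range (n + 1), (M / ((n : ℝ) + 2)) := Finset.sum_le_sum hterm
        _ = ((n : ℝ) + 1) * (M / ((n : ℝ) + 2)) := by
            rw [Finset.sum_const, Finset.card_range]; push_cast; ring
        _ ≤ M := by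
            rw [mul_div_assoc', div_le_iff₀ (by positivity)]
            nlinarith [Nat.cast_nonneg (α := ℝ) n]
    have := (hstd n).2
    rw [hsplit] at this
    linarith
  constructor
  · exact ⟨M, fun n => ⟨by linarith [(hstd n).1], hDub n⟩⟩
  · intro ω hω u v w hu hv hw
    have hlog : ∀ n : ℕ, 0 < Real.log (2 + (n : ℝ)) := by
      intro n
      apply Real.log_pos
      linarith [Nat.cast_nonneg (α := ℝ) n]
    -- u + v - w tends to 0
    have htend : Tendsto (fun n => ((u + v - w : lp (fun _ : ℕ => ℝ) ⊤) : ∀ _ : ℕ, ℝ) n)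
        atTop (nhds 0) := by
      have hcoe : ∀ n : ℕ, ((u + v - w : lp (fun _ : ℕ => ℝ) ⊤) : ∀ _ : ℕ, ℝ) n =
          (Real.log (2 + (n : ℝ)))⁻¹ *
            ((∑ k ∈ Finset.range (n + 1), (singVal k A + singVal k B)) -
              ∑ k ∈ Finset.range (n + 1), singVal k (A + B)) := by
        intro n
        have : ((u + v - w : lp (fun _ : ℕ => ℝ) ⊤) : ∀ _ : ℕ, ℝ) n =
            (u : ∀ _ : ℕ, ℝ) n + (v : ∀ _ : ℕ, ℝ) n - (w : ∀ _ : ℕ, ℝ) n := by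
          rw [lp.coeFn_sub, lp.coeFn_add]; simp
        rw [this, hu n, hv n, hw n, Finset.sum_add_distrib]
        ring
      have hloginv : Tendsto (fun n : ℕ => (Real.log (2 + (n : ℝ)))⁻¹) atTop (nhds 0) := by
        apply Tendsto.inv_tendsto_atTop
        exact Real.tendsto_log_atTop.comp
          (tendsto_atTop_add_const_left _ 2 tendsto_natCast_atTop_atTop)
      have hg : Tendsto (fun n : ℕ => (Real.log (2 + (n : ℝ)))⁻¹ * M) atTop (nhds 0) := by
        simpa using hloginv.mul_const M
      apply squeeze_zero (g := fun n : ℕ => (Real.log (2 + (n : ℝ)))⁻¹ * M) _ _ hg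
      · intro n
        rw [hcoe n]
        exact mul_nonneg (inv_nonneg.mpr (hlog n).le) (by linarith [(hstd n).1])
      · intro n
        rw [hcoe n]
        exact mul_le_mul_of_nonneg_left (hDub n) (inv_nonneg.mpr (hlog n).le)
    have h0 : ω (u + v - w) = 0 := hω _ 0 htend
    have : ω u + ω v - ω w = 0 := by
      rw [← map_add, ← map_sub]; exact h0
    linarith
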